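/- Let a, b ∈ ℕ with [a,b] ∉ S₂. If F ∈ full_{a,b}(S₂), then E₁(F), E₂(F), ..., E_{a-1}(F) are all full Schreier sets. -/

import Mathlib

open Finset

/-- `F < G` for finite sets: every element of `F` is below every element of `G`. -/
def FinsetLT (F G : Finset ℕ) : Prop := ∀ x ∈ F, ∀ y ∈ G, x < y

/-- Membership in the Schreier family `S₁`: a finite set of positive integers
with `|F| ≤ min F` (the empty set belongs trivially). -/
def IsSchreier (F : Finset ℕ) : Prop := ∀ n ∈ F, 0 < n ∧ F.card ≤ n

/-- `F` is a union of at most `d` sets `F₁ < F₂ < ⋯`, each in the family `P`. -/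
def Combine (P : Finset ℕ → Prop) (d : ℕ) (F : Finset ℕ) : Prop :=
  ∃ L : List (Finset ℕ), L.length ≤ d ∧ L.Pairwise FinsetLT ∧
    (∀ G ∈ L, P G) ∧ L.foldr (· ∪ ·) ∅ = F

/-- Membership in `S₂`. -/
def MemS2 (F : Finset ℕ) : Prop :=
  F = ∅ ∨ ∃ h : F.Nonempty, Combine IsSchreier (F.min' h) F

/-- Membership in `S₃`. -/
def MemS3 (F : Finset ℕ) : Prop :=
  F = ∅ ∨ ∃ h : F.Nonempty, Combine MemS2 (F.min' h) F

/-- `F` is a maximal member of the family `P` (among sets of positive integers). -/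
def IsFull (P : Finset ℕ → Prop) (F : Finset ℕ) : Prop :=
  P F ∧ ∀ n : ℕ, 0 < n → n ∉ F → ¬ P (insert n F)

/-- `F ∈ full_{a,b}(P)`. -/
def FullAB (P : Finset ℕ → Prop) (a b : ℕ) (F : Finset ℕ) : Prop :=
  P F ∧ F ⊆ Finset.Icc a b ∧ a ∈ F ∧
    ∀ n ∈ Finset.Icc a b, n ∉ F → ¬ P (insert n F)

/-- The tower function `τ`. -/
def tau : ℕ → ℕ → ℕ
  | 0, a => a
  | i + 1, a => 2 ^ tau i a

/-- `E₁(F)`: `F` itself if `|F| ≤ min F`, otherwise the `min F` smallest elements of `F`. -/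
def E1 (F : Finset ℕ) : Finset ℕ :=
  if h : F.Nonempty then ((F.sort (· ≤ ·)).take (F.min' h)).toFinset else ∅

/-- Union of the first `i` greedy pieces. -/
def Eacc : ℕ → Finset ℕ → Finset ℕ
  | 0, _ => ∅
  | i + 1, F => Eacc i F ∪ E1 (F \ Eacc i F)

/-- The `i`-th greedy piece `E_i(F)` (for `i ≥ 1`). -/
def Epiece (i : ℕ) (F : Finset ℕ) : Finset ℕ := E1 (F \ Eacc (i - 1) F)

open Classical in
/-- `E₁*(F)`: `F` itself if `F ∈ S₂`, otherwise `E₁(F) ∪ ⋯ ∪ E_{min F}(F)`. -/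
noncomputable def E1star (F : Finset ℕ) : Finset ℕ :=
  if MemS2 F then F
  else if h : F.Nonempty then Eacc (F.min' h) F else ∅

/-- Union of the first `i` starred greedy pieces. -/
noncomputable def EaccStar : ℕ → Finset ℕ → Finset ℕ
  | 0, _ => ∅
  | i + 1, F => EaccStar i F ∪ E1star (F \ EaccStar i F)

/-- The `i`-th starred greedy piece `E_i*(F)` (for `i ≥ 1`). -/
noncomputable def EpieceStar (i : ℕ) (F : Finset ℕ) : Finset ℕ :=
  E1star (F \ EaccStar (i - 1) F)

/-! ### Auxiliary lemmas -/

lemma E1_subset (G : Finset ℕ) : E1 G ⊆ G := by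
  unfold E1
  split
  · intro x hx
    rw [List.mem_toFinset] at hx
    exact (Finset.mem_sort _).1 (List.mem_of_mem_take hx)
  · exact Finset.empty_subset G

lemma E1_card (G : Finset ℕ) (h : G.Nonempty) :
    (E1 G).card = min (G.min' h) G.card := by
  unfold E1
  rw [dif_pos h,
    List.toFinset_card_of_nodup ((Finset.sort_nodup _ _).sublist (List.take_sublist _ _)),
    List.length_take, Finset.length_sort]

lemma E1_eq_self (G : Finset ℕ) (h : G.Nonempty) (hc : G.card ≤ G.min' h) : E1 G = G := by
  unfold E1
  rw [dif_pos h, List.take_of_length_le (by rw [Finset.length_sort]; exact hc),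
    Finset.sort_toFinset]

lemma E1_lt (G : Finset ℕ) : ∀ x ∈ E1 G, ∀ y ∈ G, y ∉ E1 G → x < y := by
  intro x hx y hyG hyn
  by_cases h : G.Nonempty
  · unfold E1 at hx hyn
    rw [dif_pos h, List.mem_toFinset] at hx hyn
    set l := G.sort (· ≤ ·) with hl
    set k := G.min' h
    have hyl : y ∈ l := (Finset.mem_sort _).2 hyG
    have hyd : y ∈ l.drop k := by
      have hsplit : y ∈ l.take k ++ l.drop k := by
        rw [List.take_append_drop k l]; exact hyl
      rcases List.mem_append.1 hsplit with h' | h'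
      · exact absurd h' hyn
      · exact h'
    have hsorted : l.Pairwise (· ≤ ·) := Finset.pairwise_sort _ _
    have hpair : List.Pairwise (· ≤ ·) (l.take k ++ l.drop k) := by
      rw [List.take_append_drop]; exact hsorted
    have hle : x ≤ y := (List.pairwise_append.1 hpair).2.2 x hx y hyd
    have hne : x ≠ y := fun he => hyn (he ▸ hx)
    exact lt_of_le_of_ne hle hne
  · exact absurd ⟨y, hyG⟩ h

lemma min'_mem_E1 (G : Finset ℕ) (h : G.Nonempty) (hp : 0 < G.min' h) :
    G.min' h ∈ E1 G := by
  by_contra hn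
  have hx : ∃ x, x ∈ E1 G := by
    have hcard : 0 < (E1 G).card := by
      rw [E1_card G h]
      exact lt_min hp h.card_pos
    exact Finset.card_pos.1 hcard
  obtain ⟨x, hx⟩ := hx
  have h1 : x < G.min' h := E1_lt G x hx _ (G.min'_mem h) hn
  exact absurd (G.min'_le x (E1_subset G hx)) (not_le.2 h1)

lemma E1_schreier (G : Finset ℕ) (hpos : ∀ x ∈ G, 0 < x) : IsSchreier (E1 G) := by
  intro x hx
  have hxG := E1_subset G hx
  have hG : G.Nonempty := ⟨x, hxG⟩
  refine ⟨hpos x hxG, ?_⟩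
  calc (E1 G).card ≤ G.min' hG := by rw [E1_card G hG]; exact min_le_left _ _
    _ ≤ x := G.min'_le x hxG

lemma E1_isFull (G : Finset ℕ) (hpos : ∀ x ∈ G, 0 < x) (hrem : (G \ E1 G).Nonempty) :
    IsFull IsSchreier (E1 G) := by
  obtain ⟨y, hy⟩ := hrem
  rw [Finset.mem_sdiff] at hy
  have hG : G.Nonempty := ⟨y, hy.1⟩
  set m := G.min' hG with hm
  have hm0 : 0 < m := hpos _ (G.min'_mem hG)
  have hne : E1 G ≠ G := fun h => hy.2 (h.symm ▸ hy.1)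
  have hcard : (E1 G).card = m := by
    rw [E1_card G hG]
    rcases le_or_gt G.card m with hc | hc
    · exact absurd (E1_eq_self G hG hc) hne
    · exact min_eq_left hc.le
  have hmm : m ∈ E1 G := min'_mem_E1 G hG hm0
  constructor
  · exact E1_schreier G hpos
  · intro n _ hnotin hins
    have h2 := (hins m (Finset.mem_insert_of_mem hmm)).2
    rw [Finset.card_insert_of_notMem hnotin, hcard] at h2
    omega

lemma Eacc_subset (F : Finset ℕ) : ∀ i, Eacc i F ⊆ F := by
  intro i
  induction i with
  | zero => exact Finset.empty_subset F
  | succ i ih =>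
    show Eacc i F ∪ E1 (F \ Eacc i F) ⊆ F
    exact Finset.union_subset ih ((E1_subset _).trans (Finset.sdiff_subset))

lemma Eacc_mono (F : Finset ℕ) {i j : ℕ} (hij : i ≤ j) : Eacc i F ⊆ Eacc j F := by
  induction j with
  | zero => rw [Nat.le_zero.1 hij]
  | succ j ih =>
    rcases Nat.lt_succ_iff_lt_or_eq.1 (Nat.lt_succ_of_le hij) with h | h
    · exact (ih (Nat.lt_succ_iff.1 h)).trans (Finset.subset_union_left)
    · rw [h]

lemma epiece_full (F : Finset ℕ) (hpos : ∀ x ∈ F, 0 < x) (i : ℕ) (h1 : 1 ≤ i)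
    (hrem : (F \ Eacc i F).Nonempty) : IsFull IsSchreier (Epiece i F) := by
  obtain ⟨j, rfl⟩ : ∃ j, i = j + 1 := ⟨i - 1, (Nat.sub_add_cancel h1).symm⟩
  have hEp : Epiece (j + 1) F = E1 (F \ Eacc j F) := by simp [Epiece]
  rw [hEp]
  apply E1_isFull
  · intro x hx; exact hpos x (Finset.mem_sdiff.1 hx).1
  · have heq : (F \ Eacc j F) \ E1 (F \ Eacc j F) = F \ Eacc (j + 1) F := by
      show _ = F \ (Eacc j F ∪ E1 (F \ Eacc j F))
      ext x; simp only [Finset.mem_sdiff, Finset.mem_union]; tauto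
    rw [heq]; exact hrem

/-- The greedy list of pieces. -/
def Elist : ℕ → Finset ℕ → List (Finset ℕ)
  | 0, _ => []
  | i + 1, F => Elist i F ++ [E1 (F \ Eacc i F)]

lemma Elist_length (i : ℕ) (F : Finset ℕ) : (Elist i F).length = i := by
  induction i with
  | zero => rfl
  | succ i ih => simp [Elist, ih]

lemma foldr_union_init (L : List (Finset ℕ)) (x : Finset ℕ) :
    L.foldr (· ∪ ·) x = L.foldr (· ∪ ·) ∅ ∪ x := by
  induction L with
  | nil => simp
  | cons G L ih => simp [List.foldr_cons, ih, Finset.union_assoc]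

lemma Elist_union (i : ℕ) (F : Finset ℕ) :
    (Elist i F).foldr (· ∪ ·) ∅ = Eacc i F := by
  induction i with
  | zero => rfl
  | succ i ih =>
    show (Elist i F ++ [E1 (F \ Eacc i F)]).foldr (· ∪ ·) ∅ = Eacc i F ∪ _
    rw [List.foldr_append]
    simp only [List.foldr_cons, List.foldr_nil, Finset.union_empty]
    rw [foldr_union_init, ih]

lemma Elist_mem {i : ℕ} {F G : Finset ℕ} (hG : G ∈ Elist i F) :
    ∃ j, j < i ∧ G = E1 (F \ Eacc j F) := by
  induction i with
  | zero => exact absurd hG List.not_mem_nil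
  | succ i ih =>
    rcases List.mem_append.1 hG with h | h
    · obtain ⟨j, hj, hG⟩ := ih h
      exact ⟨j, Nat.lt_succ_of_lt hj, hG⟩
    · exact ⟨i, Nat.lt_succ_self i, List.mem_singleton.1 h⟩

lemma Elist_schreier (i : ℕ) (F : Finset ℕ) (hpos : ∀ x ∈ F, 0 < x) :
    ∀ G ∈ Elist i F, IsSchreier G := by
  intro G hG
  obtain ⟨j, _, rfl⟩ := Elist_mem hG
  exact E1_schreier _ (fun x hx => hpos x (Finset.mem_sdiff.1 hx).1)

lemma Elist_pairwise (i : ℕ) (F : Finset ℕ) : (Elist i F).Pairwise FinsetLT := by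
  induction i with
  | zero => exact List.Pairwise.nil
  | succ i ih =>
    apply List.pairwise_append.2
    refine ⟨ih, List.pairwise_singleton _ _, ?_⟩
    intro G hG H hH
    rw [List.mem_singleton] at hH
    subst hH
    obtain ⟨j, hj, rfl⟩ := Elist_mem hG
    intro x hx y hy
    have hyF : y ∈ F \ Eacc i F := E1_subset _ hy
    have hyj1 : y ∈ F \ Eacc (j + 1) F := by
      rw [Finset.mem_sdiff] at hyF ⊢
      exact ⟨hyF.1, fun h => hyF.2 (Eacc_mono F hj h)⟩
    have hyG : y ∈ F \ Eacc j F := by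
      rw [Finset.mem_sdiff] at hyj1 ⊢
      exact ⟨hyj1.1, fun h => hyj1.2 (Eacc_mono F (Nat.le_succ j) h)⟩
    have hynot : y ∉ E1 (F \ Eacc j F) := by
      intro h
      rw [Finset.mem_sdiff] at hyj1
      exact hyj1.2 (Finset.mem_union_right _ h)
    exact E1_lt _ x hx y hyG hynot

lemma mem_foldr_union {L : List (Finset ℕ)} {y : ℕ} :
    y ∈ L.foldr (· ∪ ·) ∅ ↔ ∃ H ∈ L, y ∈ H := by
  induction L with
  | nil => simp
  | cons G L ih => simp [List.foldr_cons, ih]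

/-- Insert an element `n` into a decomposition. -/
def ins (n : ℕ) : List (Finset ℕ) → List (Finset ℕ)
  | [] => [{n}]
  | G :: L =>
    if ∀ x ∈ G, x < n then G :: ins n L
    else if ∀ x ∈ G, n < x then {n} :: G :: L
    else (insert n (G.filter (· < n))) :: (G.filter (fun x => n < x)) :: L

lemma ins_length (n : ℕ) (L : List (Finset ℕ)) : (ins n L).length ≤ L.length + 1 := by
  induction L with
  | nil => simp [ins]
  | cons G L ih =>
    rw [ins]
    split_ifs with h1 h2
    · simpa using Nat.succ_le_succ ih
    · simp
    · simp

lemma ins_union (n : ℕ) (L : List (Finset ℕ)) (hn : n ∉ L.foldr (· ∪ ·) ∅) :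
    (ins n L).foldr (· ∪ ·) ∅ = insert n (L.foldr (· ∪ ·) ∅) := by
  induction L with
  | nil => simp [ins]
  | cons G L ih =>
    simp only [List.foldr_cons, Finset.mem_union, not_or] at hn
    rw [ins]
    split_ifs with h1 h2
    · simp only [List.foldr_cons, ih hn.2]
      ext x
      simp only [Finset.mem_union, Finset.mem_insert]
      tauto
    · simp only [List.foldr_cons]
      ext x
      simp only [Finset.mem_union, Finset.mem_insert, Finset.mem_singleton]
      try tauto
    · simp only [List.foldr_cons]
      ext x
      simp only [Finset.mem_union, Finset.mem_insert, Finset.mem_filter]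
      constructor
      · rintro ((rfl | ⟨hxG, _⟩) | ⟨hxG, _⟩ | hx)
        · exact Or.inl rfl
        · exact Or.inr (Or.inl hxG)
        · exact Or.inr (Or.inl hxG)
        · exact Or.inr (Or.inr hx)
      · rintro (rfl | hxG | hxU)
        · exact Or.inl (Or.inl rfl)
        · rcases Nat.lt_trichotomy x n with h | h | h
          · exact Or.inl (Or.inr ⟨hxG, h⟩)
          · exact absurd (h ▸ hxG) hn.1
          · exact Or.inr (Or.inl ⟨hxG, h⟩)
        · exact Or.inr (Or.inr hxU)

lemma ins_schreier (n : ℕ) (hn0 : 0 < n) (L : List (Finset ℕ))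
    (hS : ∀ G ∈ L, IsSchreier G) (hn : n ∉ L.foldr (· ∪ ·) ∅) :
    ∀ H ∈ ins n L, IsSchreier H := by
  induction L with
  | nil =>
    intro H hH
    rw [ins, List.mem_singleton] at hH
    subst hH
    intro x hx
    rw [Finset.mem_singleton] at hx
    subst hx
    exact ⟨hn0, by rw [Finset.card_singleton]; exact hn0⟩
  | cons G L ih =>
    simp only [List.foldr_cons, Finset.mem_union, not_or] at hn
    have hGS : IsSchreier G := hS G List.mem_cons_self
    have hLS : ∀ G' ∈ L, IsSchreier G' := fun G' h => hS G' (List.mem_cons_of_mem _ h)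
    intro H hH
    rw [ins] at hH
    split_ifs at hH with h1 h2
    · rcases List.mem_cons.1 hH with rfl | hH
      · exact hGS
      · exact ih hLS hn.2 H hH
    · rcases List.mem_cons.1 hH with rfl | hH
      · intro x hx
        rw [Finset.mem_singleton] at hx
        subst hx
        exact ⟨hn0, by rw [Finset.card_singleton]; exact hn0⟩
      · rcases List.mem_cons.1 hH with rfl | hH
        · exact hGS
        · exact hLS H hH
    · -- split case
      obtain ⟨v, hvG, hvn⟩ : ∃ v ∈ G, n < v := by
        push_neg at h1
        obtain ⟨v, hvG, hvn⟩ := h1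
        exact ⟨v, hvG, lt_of_le_of_ne hvn (fun h => hn.1 (h ▸ hvG))⟩
      obtain ⟨u, huG, hun⟩ : ∃ u ∈ G, u < n := by
        push_neg at h2
        obtain ⟨u, huG, hun⟩ := h2
        exact ⟨u, huG, lt_of_le_of_ne hun (fun h => hn.1 (h.symm ▸ huG))⟩
      have hssub : G.filter (· < n) ⊂ G := by
        refine Finset.ssubset_iff_of_subset (Finset.filter_subset _ _) |>.2 ?_
        exact ⟨v, hvG, by simp [not_lt.2 hvn.le]⟩
      have hAcard : (insert n (G.filter (· < n))).card ≤ G.card := by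
        have h2' : n ∉ G.filter (· < n) := by simp
        rw [Finset.card_insert_of_notMem h2']
        exact Nat.succ_le_of_lt (Finset.card_lt_card hssub)
      rcases List.mem_cons.1 hH with rfl | hH
      · intro x hx
        rcases Finset.mem_insert.1 hx with rfl | hx
        · refine ⟨hn0, hAcard.trans ?_⟩
          exact ((hGS u huG).2).trans hun.le
        · have hxG : x ∈ G := (Finset.mem_filter.1 hx).1
          exact ⟨(hGS x hxG).1, hAcard.trans (hGS x hxG).2⟩
      · rcases List.mem_cons.1 hH with rfl | hH
        · intro x hx
          have hxG : x ∈ G := (Finset.mem_filter.1 hx).1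
          exact ⟨(hGS x hxG).1,
            (Finset.card_le_card (Finset.filter_subset _ _)).trans (hGS x hxG).2⟩
        · exact hLS H hH

lemma ins_pairwise (n : ℕ) (L : List (Finset ℕ)) (hP : L.Pairwise FinsetLT)
    (hn : n ∉ L.foldr (· ∪ ·) ∅) : (ins n L).Pairwise FinsetLT := by
  induction L with
  | nil => simp [ins]
  | cons G L ih =>
    simp only [List.foldr_cons, Finset.mem_union, not_or] at hn
    obtain ⟨hGlt, hPL⟩ := List.pairwise_cons.1 hP
    rw [ins]
    split_ifs with h1 h2
    · apply List.pairwise_cons.2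
      refine ⟨?_, ih hPL hn.2⟩
      intro H hH x hx y hy
      have hy' : y ∈ (ins n L).foldr (· ∪ ·) ∅ := mem_foldr_union.2 ⟨H, hH, hy⟩
      rw [ins_union n L hn.2, Finset.mem_insert] at hy'
      rcases hy' with rfl | hy'
      · exact h1 x hx
      · obtain ⟨H', hH', hyH'⟩ := mem_foldr_union.1 hy'
        exact hGlt H' hH' x hx y hyH'
    · obtain ⟨v, hvG, hvn⟩ : ∃ v ∈ G, n < v := by
        push_neg at h1
        obtain ⟨v, hvG, hvn⟩ := h1
        exact ⟨v, hvG, lt_of_le_of_ne hvn (fun h => hn.1 (h ▸ hvG))⟩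
      apply List.pairwise_cons.2
      refine ⟨?_, hP⟩
      intro H hH x hx y hy
      rw [Finset.mem_singleton] at hx
      subst hx
      rcases List.mem_cons.1 hH with rfl | hHL
      · exact h2 y hy
      · exact hvn.trans (hGlt H hHL v hvG y hy)
    · obtain ⟨v, hvG, hvn⟩ : ∃ v ∈ G, n < v := by
        push_neg at h1
        obtain ⟨v, hvG, hvn⟩ := h1
        exact ⟨v, hvG, lt_of_le_of_ne hvn (fun h => hn.1 (h ▸ hvG))⟩
      apply List.pairwise_cons.2
      constructor
      · intro H hH x hx y hy
        rcases List.mem_cons.1 hH with rfl | hHL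
        · -- H = filter (n < ·)
          have hy' : n < y := (Finset.mem_filter.1 hy).2
          rcases Finset.mem_insert.1 hx with rfl | hx
          · exact hy'
          · exact lt_trans (Finset.mem_filter.1 hx).2 hy'
        · rcases Finset.mem_insert.1 hx with hxn | hx
          · exact hxn ▸ hvn.trans (hGlt H hHL v hvG y hy)
          · exact hGlt H hHL x (Finset.mem_filter.1 hx).1 y hy
      · apply List.pairwise_cons.2
        refine ⟨?_, hPL⟩
        intro H hH x hx y hy
        exact hGlt H hH x (Finset.mem_filter.1 hx).1 y hy

theorem stmt16 (a b : ℕ) (hab : ¬ MemS2 (Finset.Icc a b))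
    (F : Finset ℕ) (hF : FullAB MemS2 a b F) :
    ∀ i, 1 ≤ i → i ≤ a - 1 → IsFull IsSchreier (Epiece i F) := by
  obtain ⟨hFS2, hFsub, haF, hmax⟩ := hF
  intro i h1 hia
  have ha2 : 2 ≤ a := by omega
  have hge : ∀ x ∈ F, a ≤ x := fun x hx => (Finset.mem_Icc.1 (hFsub hx)).1
  have hpos : ∀ x ∈ F, 0 < x := fun x hx => lt_of_lt_of_le (by omega) (hge x hx)
  by_contra hnot
  -- then F is exhausted within i pieces
  have hremE : F \ Eacc i F = ∅ := by
    by_contra h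
    exact hnot (epiece_full F hpos i h1 (Finset.nonempty_iff_ne_empty.2 h))
  have hFeq : Eacc i F = F :=
    Finset.Subset.antisymm (Eacc_subset F i) (Finset.sdiff_eq_empty_iff_subset.1 hremE)
  -- find an element of Icc a b not in F
  have hFne : F ≠ Finset.Icc a b := fun h => hab (h ▸ hFS2)
  obtain ⟨n, hnI, hnF⟩ := Finset.exists_of_ssubset (lt_of_le_of_ne hFsub hFne)
  apply hmax n hnI hnF
  -- show insert n F ∈ S₂
  have hna : a ≤ n := (Finset.mem_Icc.1 hnI).1
  have hn0 : 0 < n := by omega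
  have hne' : (insert n F).Nonempty := ⟨n, Finset.mem_insert_self n F⟩
  have hmin : (insert n F).min' hne' = a := by
    apply le_antisymm
    · exact Finset.min'_le _ a (Finset.mem_insert_of_mem haF)
    · apply Finset.le_min'
      intro y hy
      rcases Finset.mem_insert.1 hy with rfl | hy
      · exact hna
      · exact hge y hy
  refine Or.inr ⟨hne', ?_⟩
  rw [hmin]
  have hnU : n ∉ (Elist i F).foldr (· ∪ ·) ∅ := by
    rw [Elist_union, hFeq]; exact hnF
  refine ⟨ins n (Elist i F), ?_, ?_, ?_, ?_⟩
  · calc (ins n (Elist i F)).length ≤ (Elist i F).length + 1 := ins_length n _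
      _ = i + 1 := by rw [Elist_length]
      _ ≤ a := by omega
  · exact ins_pairwise n _ (Elist_pairwise i F) hnU
  · exact ins_schreier n hn0 _ (Elist_schreier i F hpos) hnU
  · rw [ins_union n _ hnU, Elist_union, hFeq]
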